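/- Let v solve the heat equation v_t = (σ²/2) v_xx with constant σ, and assume v is C^3 in time and C^6 in space with bounded derivatives. Set v^n(x) := v(nΔt, x) and S⁰_h u(x) := (1/2)(u(x − σ√h) + u(x + σ√h)). Then v^{n+1} = (1/3)(v^n + S⁰_{Δt} v^n + S⁰_{Δt} S⁰_{Δt} v^n) + O(Δt³) in L^∞, i.e. the coefficients (a,b,c) = (1/3,1/3,1/3) are the unique solution of the linear system a+b+c = 1, b/2 + c = 1/2, b/24 + c/3 = 1/8. -/

import Mathlib

open Set Finset
open scoped Nat


lemma myIDW {N : ℕ} {f : ℝ → ℝ} (hf : ContDiff ℝ (N : ℕ∞) f) {s : Set ℝ}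
    (hs : UniqueDiffOn ℝ s) {k : ℕ} (hk : k ≤ N) {y : ℝ} (hy : y ∈ s) :
    iteratedDerivWithin k f s y = iteratedDeriv k f y := by
  have h1 : HasFTaylorSeriesUpToOn (N : ℕ∞) f (ftaylorSeriesWithin ℝ f univ) s :=
    ((hf.contDiffOn (s := univ)).ftaylorSeriesWithin uniqueDiffOn_univ).mono (subset_univ s)
  have h2 : ftaylorSeriesWithin ℝ f univ y k = iteratedFDerivWithin ℝ k f s y :=
    h1.eq_iteratedFDerivWithin_of_uniqueDiffOn (by exact_mod_cast hk) hs hy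
  have h3 : ftaylorSeriesWithin ℝ f univ y k = iteratedFDeriv ℝ k f y := by
    simp [ftaylorSeriesWithin, iteratedFDerivWithin_univ]
  rw [iteratedDerivWithin_eq_iteratedFDerivWithin, iteratedDeriv_eq_iteratedFDeriv, ← h2, h3]

lemma taylor_right {f : ℝ → ℝ} {n : ℕ} (hf : ContDiff ℝ ((n : ℕ∞) + 1) f) {M : ℝ}
    (hM : ∀ y, |iteratedDeriv (n + 1) f y| ≤ M) {x₀ x : ℝ} (h : x₀ ≤ x) :
    |f x - ∑ i ∈ Finset.range (n + 1), ((i ! : ℝ)⁻¹ * (x - x₀) ^ i) * iteratedDeriv i f x₀|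
      ≤ M * (x - x₀) ^ (n + 1) / n ! := by
  have hf' : ContDiff ℝ ((n + 1 : ℕ) : ℕ∞) f := by exact_mod_cast hf
  rcases eq_or_lt_of_le h with rfl | hlt
  · have : ∀ i ∈ Finset.range (n + 1),
        ((i ! : ℝ)⁻¹ * (x₀ - x₀) ^ i) * iteratedDeriv i f x₀ =
          if i = 0 then f x₀ else 0 := by
      intro i _
      rcases Nat.eq_zero_or_pos i with rfl | hi
      · simp
      · simp [zero_pow hi.ne', if_neg hi.ne']
    rw [Finset.sum_congr rfl this]
    simp
  · have key := taylor_mean_remainder_bound (f := f) (a := x₀) (b := x) (C := M) (n := n) h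
      (hf'.contDiffOn) (right_mem_Icc.2 h) ?_
    · have hT : taylorWithinEval f n (Icc x₀ x) x₀ x =
          ∑ i ∈ Finset.range (n + 1), ((i ! : ℝ)⁻¹ * (x - x₀) ^ i) * iteratedDeriv i f x₀ := by
        rw [taylor_within_apply]
        refine Finset.sum_congr rfl fun i hi => ?_
        rw [myIDW hf' (uniqueDiffOn_Icc hlt) (by have := Finset.mem_range.1 hi; omega) (left_mem_Icc.2 h)]
        simp [smul_eq_mul]
      rw [hT] at key
      simpa using key
    · intro y hy
      rw [myIDW hf' (uniqueDiffOn_Icc hlt) le_rfl hy]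
      simpa using hM y

lemma taylor_two_sided {f : ℝ → ℝ} {n : ℕ} (hf : ContDiff ℝ ((n : ℕ∞) + 1) f) {M : ℝ}
    (hM : ∀ y, |iteratedDeriv (n + 1) f y| ≤ M) (x₀ x : ℝ) :
    |f x - ∑ i ∈ Finset.range (n + 1), ((i ! : ℝ)⁻¹ * (x - x₀) ^ i) * iteratedDeriv i f x₀|
      ≤ M * |x - x₀| ^ (n + 1) / n ! := by
  rcases le_total x₀ x with h | h
  · have := taylor_right hf hM h
    rwa [abs_of_nonneg (sub_nonneg.2 h)]
  · set g : ℝ → ℝ := fun y => f (-y) with hg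
    have hgc : ContDiff ℝ ((n : ℕ∞) + 1) g := hf.comp (contDiff_id.neg)
    have hgd : ∀ i y, iteratedDeriv i g y = (-1 : ℝ) ^ i • iteratedDeriv i f (-y) := fun i y =>
      iteratedDeriv_comp_neg i f y
    have hgM : ∀ y, |iteratedDeriv (n + 1) g y| ≤ M := by
      intro y
      rw [hgd, smul_eq_mul, abs_mul, abs_pow, abs_neg, abs_one, one_pow, one_mul]
      exact hM (-y)
    have hx : -x₀ ≤ -x := neg_le_neg h
    have key := taylor_right hgc hgM hx
    have hone : ∀ i : ℕ, ((-1 : ℝ) ^ i) * ((-1 : ℝ) ^ i) = 1 := by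
      intro i
      rw [← pow_add]
      exact Even.neg_one_pow ⟨i, rfl⟩
    have hsum : ∑ i ∈ Finset.range (n + 1),
          ((i ! : ℝ)⁻¹ * (-x - -x₀) ^ i) * iteratedDeriv i g (-x₀)
        = ∑ i ∈ Finset.range (n + 1), ((i ! : ℝ)⁻¹ * (x - x₀) ^ i) * iteratedDeriv i f x₀ := by
      refine Finset.sum_congr rfl fun i _ => ?_
      rw [hgd, neg_neg, smul_eq_mul, show (-x - -x₀ : ℝ) = -(x - x₀) by ring, neg_pow]
      calc (i ! : ℝ)⁻¹ * ((-1) ^ i * (x - x₀) ^ i) * ((-1) ^ i * iteratedDeriv i f x₀)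
          = ((-1 : ℝ) ^ i * (-1) ^ i) * ((i ! : ℝ)⁻¹ * (x - x₀) ^ i * iteratedDeriv i f x₀) := by
            ring
        _ = (i ! : ℝ)⁻¹ * (x - x₀) ^ i * iteratedDeriv i f x₀ := by rw [hone]; ring
    have hgx : g (-x) = f x := by simp [hg]
    rw [hgx, hsum] at key
    have habs : (-x - -x₀ : ℝ) ^ (n + 1) = |x - x₀| ^ (n + 1) := by
      rw [abs_of_nonpos (sub_nonpos.2 h)]
      ring_nf
    rwa [habs] at key

noncomputable def Dx (F : ℝ × ℝ → ℝ) : ℝ × ℝ → ℝ := fun p => fderiv ℝ F p (0, 1)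
noncomputable def Dt (F : ℝ × ℝ → ℝ) : ℝ × ℝ → ℝ := fun p => fderiv ℝ F p (1, 0)

lemma contDiff_Dx {m : ℕ} {F : ℝ × ℝ → ℝ} (h : ContDiff ℝ ((m + 1 : ℕ) : ℕ∞) F) :
    ContDiff ℝ (m : ℕ∞) (Dx F) :=
  (h.fderiv_right (by exact_mod_cast le_rfl)).clm_apply contDiff_const

lemma contDiff_Dt {m : ℕ} {F : ℝ × ℝ → ℝ} (h : ContDiff ℝ ((m + 1 : ℕ) : ℕ∞) F) :
    ContDiff ℝ (m : ℕ∞) (Dt F) :=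
  (h.fderiv_right (by exact_mod_cast le_rfl)).clm_apply contDiff_const

lemma contDiff_Dx_iterate : ∀ (k : ℕ) (m : ℕ) (F : ℝ × ℝ → ℝ),
    ContDiff ℝ ((m + k : ℕ) : ℕ∞) F → ContDiff ℝ (m : ℕ∞) (Dx^[k] F) := by
  intro k
  induction k with
  | zero => intro m F h; simpa using h
  | succ k ih =>
    intro m F h
    rw [Function.iterate_succ_apply]
    refine ih m (Dx F) (contDiff_Dx (m := m + k) ?_)
    rwa [show m + k + 1 = m + (k + 1) by ring]

lemma hasDerivAt_sliceX {G : ℝ × ℝ → ℝ} (hG : DifferentiableAt ℝ G (t, x)) :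
    HasDerivAt (fun y => G (t, y)) (Dx G (t, x)) x := by
  have h1 : HasDerivAt (fun y : ℝ => ((t, y) : ℝ × ℝ)) (0, 1) x :=
    (hasDerivAt_const x t).prodMk (hasDerivAt_id x)
  exact hG.hasFDerivAt.comp_hasDerivAt x h1

lemma hasDerivAt_sliceT {G : ℝ × ℝ → ℝ} (hG : DifferentiableAt ℝ G (t, x)) :
    HasDerivAt (fun s => G (s, x)) (Dt G (t, x)) t := by
  have h1 : HasDerivAt (fun s : ℝ => ((s, x) : ℝ × ℝ)) (1, 0) t :=
    (hasDerivAt_id t).prodMk (hasDerivAt_const t x)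
  exact hG.hasFDerivAt.comp_hasDerivAt t h1

lemma iteratedDeriv_slice {F : ℝ × ℝ → ℝ} {N : ℕ} (hF : ContDiff ℝ (N : ℕ∞) F)
    {k : ℕ} (hk : k ≤ N) (t x : ℝ) :
    iteratedDeriv k (fun y => F (t, y)) x = Dx^[k] F (t, x) := by
  induction k generalizing x with
  | zero => simp
  | succ k ih =>
    have hk' : k ≤ N := by omega
    rw [iteratedDeriv_succ]
    have heq : iteratedDeriv k (fun y => F (t, y)) = fun y => Dx^[k] F (t, y) :=
      funext fun y => ih hk' y
    rw [heq]
    have hdiff : DifferentiableAt ℝ (Dx^[k] F) (t, x) := by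
      have h1 : ContDiff ℝ ((1 : ℕ) : ℕ∞) (Dx^[k] F) := by
        refine contDiff_Dx_iterate k 1 F (hF.of_le ?_)
        exact_mod_cast (by omega : (1 + k : ℕ) ≤ N)
      exact (h1.differentiable (by simp)).differentiableAt
    rw [(hasDerivAt_sliceX hdiff).deriv, Function.iterate_succ_apply' Dx k F]

lemma clairaut {G : ℝ × ℝ → ℝ} (hG : ContDiff ℝ ((2 : ℕ) : ℕ∞) G) (p : ℝ × ℝ) :
    Dt (Dx G) p = Dx (Dt G) p := by
  have hdiff : ∀ y, HasFDerivAt G (fderiv ℝ G y) y := fun y =>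
    ((hG.differentiable (by simp)) y).hasFDerivAt
  have hf'd : DifferentiableAt ℝ (fderiv ℝ G) p := by
    have : ContDiff ℝ ((1 : ℕ) : ℕ∞) (fderiv ℝ G) :=
      hG.fderiv_right (by exact_mod_cast le_rfl)
    exact (this.differentiable (by simp)).differentiableAt
  set f'' := fderiv ℝ (fderiv ℝ G) p with hf''
  have hsymm := second_derivative_symmetric hdiff hf'd.hasFDerivAt
  have key : ∀ w u : ℝ × ℝ, fderiv ℝ (fun q => fderiv ℝ G q w) p u = f'' u w := by
    intro w u
    have hc : HasFDerivAt (fun q => fderiv ℝ G q w)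
        ((ContinuousLinearMap.apply ℝ ℝ w).comp f'') p :=
      (ContinuousLinearMap.apply ℝ ℝ w).hasFDerivAt.comp p hf'd.hasFDerivAt
    rw [hc.fderiv]
    rfl
  show fderiv ℝ (fun q => fderiv ℝ G q (0, 1)) p (1, 0)
      = fderiv ℝ (fun q => fderiv ℝ G q (1, 0)) p (0, 1)
  rw [key, key, hsymm]

lemma heat_prop {σ : ℝ} {F : ℝ × ℝ → ℝ} (hF : ContDiff ℝ ((6 : ℕ) : ℕ∞) F)
    (hpde : ∀ p, Dt F p = σ ^ 2 / 2 * Dx^[2] F p) :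
    ∀ k ≤ 4, ∀ p, Dt (Dx^[k] F) p = σ ^ 2 / 2 * Dx^[k + 2] F p := by
  intro k
  induction k with
  | zero => intro _ p; exact hpde p
  | succ k ih =>
    intro hk p
    have hk4 : k ≤ 4 := by omega
    have hsm : ∀ m : ℕ, m + k ≤ 6 → ContDiff ℝ ((m : ℕ) : ℕ∞) (Dx^[k] F) := fun m hm =>
      contDiff_Dx_iterate k m F (hF.of_le (by exact_mod_cast hm))
    rw [Function.iterate_succ_apply' Dx k F]
    rw [clairaut (hsm 2 (by omega)) p]
    have hDt : Dt (Dx^[k] F) = fun q => σ ^ 2 / 2 * Dx^[k + 2] F q :=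
      funext fun q => ih hk4 q
    rw [show Dx (Dt (Dx^[k] F)) p = Dx (fun q => σ ^ 2 / 2 * Dx^[k + 2] F q) p by rw [hDt]]
    have hdiff : DifferentiableAt ℝ (Dx^[k + 2] F) p := by
      have : ContDiff ℝ ((1 : ℕ) : ℕ∞) (Dx^[k + 2] F) :=
        contDiff_Dx_iterate (k + 2) 1 F (hF.of_le (by exact_mod_cast (by omega : 1 + (k + 2) ≤ 6)))
      exact (this.differentiable (by simp)).differentiableAt
    show fderiv ℝ (fun q => σ ^ 2 / 2 * Dx^[k + 2] F q) p (0, 1) = _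
    rw [fderiv_const_mul hdiff]
    rw [Function.iterate_succ_apply' Dx (k + 2) F]
    rfl




/-- The two-point semi-Lagrangian operator for the heat equation. -/
noncomputable def S0 (σ h : ℝ) (u : ℝ → ℝ) : ℝ → ℝ :=
  fun x => (1 / 2) * (u (x - σ * Real.sqrt h) + u (x + σ * Real.sqrt h))

/-- Second-order consistency of the SLDG-2 combination for the heat equation
`v_t = (σ²/2) v_xx`: the coefficients `(a,b,c) = (1/3,1/3,1/3)` are the unique solution of
`a+b+c=1`, `b/2+c=1/2`, `b/24+c/3=1/8`, and for a smooth bounded solution `v`,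
`v^{n+1} = (1/3)(v^n + S⁰_{Δt}v^n + S⁰_{Δt}S⁰_{Δt}v^n) + O(Δt³)` uniformly in `x`. -/
theorem stmt8 (σ B : ℝ) :
    (∀ a b c : ℝ,
      (a + b + c = 1 ∧ b / 2 + c = 1 / 2 ∧ b / 24 + c / 3 = 1 / 8) ↔
        (a = 1 / 3 ∧ b = 1 / 3 ∧ c = 1 / 3)) ∧
    (∀ v : ℝ → ℝ → ℝ,
      ContDiff ℝ 6 (fun p : ℝ × ℝ => v p.1 p.2) →
      (∀ t x, HasDerivAt (fun s => v s x) (σ ^ 2 / 2 * iteratedDeriv 2 (v t) x) t) →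
      (∀ t x, |iteratedDeriv 6 (v t) x| ≤ B) →
      ∃ C : ℝ, 0 ≤ C ∧ ∀ Δt : ℝ, 0 < Δt → ∀ (n : ℕ) (x : ℝ),
        |v (((n : ℝ) + 1) * Δt) x -
          (1 / 3) * (v ((n : ℝ) * Δt) x + S0 σ Δt (v ((n : ℝ) * Δt)) x +
            S0 σ Δt (S0 σ Δt (v ((n : ℝ) * Δt))) x)| ≤ C * Δt ^ 3) := by

  constructor
  · intro a b c
    constructor
    · rintro ⟨h1, h2, h3⟩
      refine ⟨by linarith, by linarith, by linarith⟩
    · rintro ⟨rfl, rfl, rfl⟩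
      norm_num
  intro v hv hv' hB
  set F : ℝ × ℝ → ℝ := fun p => v p.1 p.2 with hFdef
  have hF6 : ContDiff ℝ ((6 : ℕ) : ℕ∞) F := by exact_mod_cast hv
  have hB0 : 0 ≤ B := (abs_nonneg _).trans (hB 0 0)
  -- global pieces
  have hdiffk : ∀ k : ℕ, k ≤ 5 → ∀ p : ℝ × ℝ, DifferentiableAt ℝ (Dx^[k] F) p := by
    intro k hk p
    have h1 : ContDiff ℝ ((1 : ℕ) : ℕ∞) (Dx^[k] F) :=
      contDiff_Dx_iterate k 1 F (hF6.of_le (by exact_mod_cast (by omega : (1 + k : ℕ) ≤ 6)))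
    exact (h1.differentiable (by simp)).differentiableAt
  have hpde : ∀ p : ℝ × ℝ, Dt F p = σ ^ 2 / 2 * Dx^[2] F p := by
    rintro ⟨s, y⟩
    have ha : HasDerivAt (fun s' => F (s', y)) (Dt F (s, y)) s :=
      hasDerivAt_sliceT ((hF6.differentiable
        (by simp)) (s, y))
    have hb := hv' s y
    have h2 : iteratedDeriv 2 (v s) y = Dx^[2] F (s, y) :=
      iteratedDeriv_slice hF6 (by norm_num) s y
    rw [h2] at hb
    exact ha.unique hb
  have hprop := heat_prop hF6 hpde
  refine ⟨B * σ ^ 6, mul_nonneg hB0 (by positivity), ?_⟩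
  intro Δt hΔt n x
  set t : ℝ := (n : ℝ) * Δt with htdef
  set T1 : ℝ := ((n : ℝ) + 1) * Δt with hT1def
  set r : ℝ := Real.sqrt Δt with hrdef
  have hr : r ^ 2 = Δt := Real.sq_sqrt hΔt.le
  set d : ℝ := σ * r with hddef
  -- spatial smoothness and derivatives
  have hu6 : ContDiff ℝ ((5 + 1 : ℕ) : ℕ∞) (v t) :=
    hF6.comp (contDiff_const.prodMk contDiff_id)
  have hMu : ∀ y, |iteratedDeriv (5 + 1) (v t) y| ≤ B := fun y => hB t y
  -- spatial Taylor bounds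
  have hEA := taylor_two_sided hu6 hMu x (x + d)
  have hEB := taylor_two_sided hu6 hMu x (x - d)
  have hEC := taylor_two_sided hu6 hMu x (x + 2 * d)
  have hED := taylor_two_sided hu6 hMu x (x - 2 * d)
  -- time direction
  set g : ℝ → ℝ := fun s => v s x with hgdef
  have hg3 : ContDiff ℝ ((2 + 1 : ℕ) : ℕ∞) g :=
    (hF6.of_le (by exact_mod_cast (by norm_num : (3 : ℕ) ≤ 6))).comp
      (contDiff_id.prodMk contDiff_const)
  have hslice : ∀ k : ℕ, k ≤ 6 → ∀ s : ℝ, iteratedDeriv k (v s) x = Dx^[k] F (s, x) :=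
    fun k hk s => iteratedDeriv_slice hF6 hk s x
  have hg1 : ∀ s, HasDerivAt g (σ ^ 2 / 2 * Dx^[2] F (s, x)) s := by
    intro s
    have h := hv' s x
    rwa [hslice 2 (by norm_num) s] at h
  have hdg : deriv g = fun s => σ ^ 2 / 2 * Dx^[2] F (s, x) := funext fun s => (hg1 s).deriv
  have hg2' : ∀ s, iteratedDeriv 2 g s = σ ^ 2 / 2 * (σ ^ 2 / 2 * Dx^[4] F (s, x)) := by
    intro s
    rw [iteratedDeriv_succ, iteratedDeriv_one, hdg]
    have h := ((hasDerivAt_sliceT (hdiffk 2 (by norm_num) (s, x))).const_mul (σ ^ 2 / 2))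
    rw [hprop 2 (by norm_num) (s, x)] at h
    exact h.deriv
  have hg3' : ∀ s,
      iteratedDeriv 3 g s = σ ^ 2 / 2 * (σ ^ 2 / 2 * (σ ^ 2 / 2 * Dx^[6] F (s, x))) := by
    intro s
    rw [iteratedDeriv_succ]
    have h2 : iteratedDeriv 2 g = fun s' => σ ^ 2 / 2 * (σ ^ 2 / 2 * Dx^[4] F (s', x)) :=
      funext hg2'
    rw [h2]
    have h := (((hasDerivAt_sliceT (hdiffk 4 (by norm_num) (s, x))).const_mul
      (σ ^ 2 / 2)).const_mul (σ ^ 2 / 2))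
    rw [hprop 4 (by norm_num) (s, x)] at h
    exact h.deriv
  have hMg : ∀ s, |iteratedDeriv (2 + 1) g s| ≤ σ ^ 2 / 2 * (σ ^ 2 / 2 * (σ ^ 2 / 2 * B)) := by
    intro s
    rw [show (2 + 1) = 3 from rfl, hg3' s]
    have h6 : Dx^[6] F (s, x) = iteratedDeriv 6 (v s) x := (hslice 6 le_rfl s).symm
    rw [h6, abs_mul, abs_mul, abs_mul, abs_of_nonneg (by positivity : (0:ℝ) ≤ σ ^ 2 / 2)]
    exact mul_le_mul_of_nonneg_left (mul_le_mul_of_nonneg_left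
      (mul_le_mul_of_nonneg_left (hB s x) (by positivity)) (by positivity)) (by positivity)
  have hET := taylor_two_sided hg3 hMg t T1
  -- rewrite the sums
  have hgt : g t = v t x := rfl
  have hgT1 : g T1 = v T1 x := rfl
  have hiter1 : iteratedDeriv 1 g t = σ ^ 2 / 2 * iteratedDeriv 2 (v t) x := by
    rw [iteratedDeriv_one, hdg]
    beta_reduce
    rw [← hslice 2 (by norm_num) t]
  have hiter2 : iteratedDeriv 2 g t
      = σ ^ 2 / 2 * (σ ^ 2 / 2 * iteratedDeriv 4 (v t) x) := by
    rw [hg2' t, ← hslice 4 (by norm_num) t]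
  have hTt : T1 - t = Δt := by rw [hT1def, htdef]; ring
  have f0 : (((0:ℕ)!:ℕ) : ℝ) = 1 := by norm_num
  have f1 : (((1:ℕ)!:ℕ) : ℝ) = 1 := by norm_num
  have f2 : (((2:ℕ)!:ℕ) : ℝ) = 2 := by norm_num [Nat.factorial]
  have f3 : (((3:ℕ)!:ℕ) : ℝ) = 6 := by norm_num [Nat.factorial]
  have f4 : (((4:ℕ)!:ℕ) : ℝ) = 24 := by norm_num [Nat.factorial]
  have f5 : (((5:ℕ)!:ℕ) : ℝ) = 120 := by norm_num [Nat.factorial]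
  have hsumT : ∑ i ∈ Finset.range (2 + 1), ((i ! : ℝ)⁻¹ * (T1 - t) ^ i) * iteratedDeriv i g t
      = v t x + Δt * (σ ^ 2 / 2 * iteratedDeriv 2 (v t) x)
        + Δt ^ 2 / 2 * (σ ^ 2 / 2 * (σ ^ 2 / 2 * iteratedDeriv 4 (v t) x)) := by
    rw [Finset.sum_range_succ, Finset.sum_range_succ, Finset.sum_range_succ,
      Finset.sum_range_zero, hiter1, hiter2, hTt, iteratedDeriv_zero, hgt, f0, f1, f2]
    ring
  have hsumS : ∀ y : ℝ,
      ∑ i ∈ Finset.range (5 + 1), ((i ! : ℝ)⁻¹ * (y - x) ^ i) * iteratedDeriv i (v t) x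
      = v t x + (y - x) * iteratedDeriv 1 (v t) x + (y - x) ^ 2 / 2 * iteratedDeriv 2 (v t) x
        + (y - x) ^ 3 / 6 * iteratedDeriv 3 (v t) x + (y - x) ^ 4 / 24 * iteratedDeriv 4 (v t) x
        + (y - x) ^ 5 / 120 * iteratedDeriv 5 (v t) x := by
    intro y
    rw [Finset.sum_range_succ, Finset.sum_range_succ, Finset.sum_range_succ,
      Finset.sum_range_succ, Finset.sum_range_succ, Finset.sum_range_succ,
      Finset.sum_range_zero, iteratedDeriv_zero, f0, f1, f2, f3, f4, f5]
    ring
  rw [hsumT, hgT1] at hET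
  rw [hsumS (x + d)] at hEA
  rw [hsumS (x - d)] at hEB
  rw [hsumS (x + 2 * d)] at hEC
  rw [hsumS (x - 2 * d)] at hED
  -- clean up the right-hand sides
  have hd6 : |d| ^ (5 + 1) = σ ^ 6 * Δt ^ 3 := by
    rw [show (5 + 1) = 6 from rfl, ← abs_pow, abs_of_nonneg (by positivity : (0:ℝ) ≤ d ^ 6),
      hddef, ← hr]
    ring
  have h2d6 : |2 * d| ^ (5 + 1) = 64 * (σ ^ 6 * Δt ^ 3) := by
    rw [show (5 + 1) = 6 from rfl, ← abs_pow, abs_of_nonneg (by positivity : (0:ℝ) ≤ (2*d) ^ 6),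
      hddef, ← hr]
    ring
  rw [hTt, abs_of_pos hΔt,
    show σ ^ 2 / 2 * (σ ^ 2 / 2 * (σ ^ 2 / 2 * B)) * Δt ^ (2 + 1) / ((2:ℕ)! : ℝ)
      = B * σ ^ 6 * Δt ^ 3 / 16 by norm_num [Nat.factorial]; ring] at hET
  rw [show x + d - x = d from by ring, hd6,
    show B * (σ ^ 6 * Δt ^ 3) / ((5:ℕ)! : ℝ) = B * σ ^ 6 * Δt ^ 3 / 120 by
      norm_num [Nat.factorial]; ring] at hEA
  rw [show x - d - x = -d from by ring, abs_neg, hd6,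
    show B * (σ ^ 6 * Δt ^ 3) / ((5:ℕ)! : ℝ) = B * σ ^ 6 * Δt ^ 3 / 120 by
      norm_num [Nat.factorial]; ring] at hEB
  rw [show x + 2 * d - x = 2 * d from by ring, h2d6,
    show B * (64 * (σ ^ 6 * Δt ^ 3)) / ((5:ℕ)! : ℝ) = B * σ ^ 6 * Δt ^ 3 * 64 / 120 by
      norm_num [Nat.factorial]; ring] at hEC
  rw [show x - 2 * d - x = -(2 * d) from by ring, abs_neg, h2d6,
    show B * (64 * (σ ^ 6 * Δt ^ 3)) / ((5:ℕ)! : ℝ) = B * σ ^ 6 * Δt ^ 3 * 64 / 120 by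
      norm_num [Nat.factorial]; ring] at hED
  -- unfold the scheme
  have hS1 : S0 σ Δt (v t) x = 1 / 2 * (v t (x - d) + v t (x + d)) := by
    simp only [S0, hddef, hrdef]
  have hS2 : S0 σ Δt (S0 σ Δt (v t)) x
      = 1 / 4 * v t (x - 2 * d) + 1 / 2 * v t x + 1 / 4 * v t (x + 2 * d) := by
    simp only [S0]
    rw [show x - σ * Real.sqrt Δt - σ * Real.sqrt Δt = x - 2 * d by rw [hddef, hrdef]; ring,
      show x - σ * Real.sqrt Δt + σ * Real.sqrt Δt = x from by ring,
      show x + σ * Real.sqrt Δt - σ * Real.sqrt Δt = x from by ring,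
      show x + σ * Real.sqrt Δt + σ * Real.sqrt Δt = x + 2 * d by rw [hddef, hrdef]; ring]
    ring
  -- key algebraic identity
  have hkey : v T1 x - 1 / 3 * (v t x + S0 σ Δt (v t) x + S0 σ Δt (S0 σ Δt (v t)) x)
      = (v T1 x - (v t x + Δt * (σ ^ 2 / 2 * iteratedDeriv 2 (v t) x)
          + Δt ^ 2 / 2 * (σ ^ 2 / 2 * (σ ^ 2 / 2 * iteratedDeriv 4 (v t) x))))
        - 1 / 3 * (1 / 2 * ((v t (x + d) - (v t x + d * iteratedDeriv 1 (v t) x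
              + d ^ 2 / 2 * iteratedDeriv 2 (v t) x + d ^ 3 / 6 * iteratedDeriv 3 (v t) x
              + d ^ 4 / 24 * iteratedDeriv 4 (v t) x + d ^ 5 / 120 * iteratedDeriv 5 (v t) x))
            + (v t (x - d) - (v t x + (-d) * iteratedDeriv 1 (v t) x
              + (-d) ^ 2 / 2 * iteratedDeriv 2 (v t) x + (-d) ^ 3 / 6 * iteratedDeriv 3 (v t) x
              + (-d) ^ 4 / 24 * iteratedDeriv 4 (v t) x
              + (-d) ^ 5 / 120 * iteratedDeriv 5 (v t) x)))
          + 1 / 4 * ((v t (x + 2 * d) - (v t x + (2 * d) * iteratedDeriv 1 (v t) x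
              + (2 * d) ^ 2 / 2 * iteratedDeriv 2 (v t) x
              + (2 * d) ^ 3 / 6 * iteratedDeriv 3 (v t) x
              + (2 * d) ^ 4 / 24 * iteratedDeriv 4 (v t) x
              + (2 * d) ^ 5 / 120 * iteratedDeriv 5 (v t) x))
            + (v t (x - 2 * d) - (v t x + (-(2 * d)) * iteratedDeriv 1 (v t) x
              + (-(2 * d)) ^ 2 / 2 * iteratedDeriv 2 (v t) x
              + (-(2 * d)) ^ 3 / 6 * iteratedDeriv 3 (v t) x
              + (-(2 * d)) ^ 4 / 24 * iteratedDeriv 4 (v t) x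
              + (-(2 * d)) ^ 5 / 120 * iteratedDeriv 5 (v t) x)))) := by
    rw [hS1, hS2, hddef, ← hr]
    ring
  have hK : 0 ≤ B * σ ^ 6 * Δt ^ 3 := by
    have h1 : (0:ℝ) ≤ σ ^ 6 := by positivity
    have h2 : (0:ℝ) ≤ Δt ^ 3 := by positivity
    exact mul_nonneg (mul_nonneg hB0 h1) h2
  rw [hkey, abs_le]
  obtain ⟨l1, r1⟩ := abs_le.1 hET
  obtain ⟨l2, r2⟩ := abs_le.1 hEA
  obtain ⟨l3, r3⟩ := abs_le.1 hEB
  obtain ⟨l4, r4⟩ := abs_le.1 hEC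
  obtain ⟨l5, r5⟩ := abs_le.1 hED
  constructor <;> linarith
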